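/- arXiv:1110.5979 — 2 statements merged into one kernel-verified Lean document; each statement's English description precedes it below -/
import Mathlib

section
/- A 3×3 block operator matrix with identity diagonal blocks and unitary off-diagonal blocks, namely M = [[1, U, V], [U†, 1, W], [V†, W†, 1]] where U, V, W are unitary operators on a finite-dimensional complex Hilbert space H, is positive semi-definite if and only if V = U * W. -/
open Matrix Kronecker Finset ComplexOrder

noncomputable section
open scoped Classical

/-- The old `Matrix.PosSemidef.sqrt` (removed from Mathlib), with its old definition. -/
def posSemidefSqrt {m : Type*} [Fintype m] [DecidableEq m] {A : Matrix m m ℂ} (hA : A.PosSemidef) :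
    Matrix m m ℂ :=
  hA.1.eigenvectorUnitary.1 * diagonal ((↑) ∘ (√·) ∘ hA.1.eigenvalues) *
    (star hA.1.eigenvectorUnitary : Matrix m m ℂ)

/-- Square root of a matrix: the PSD square root if the matrix is PSD, else 0. -/
def mSqrt {m : Type*} [Fintype m] [DecidableEq m] (A : Matrix m m ℂ) : Matrix m m ℂ :=

  if h : A.PosSemidef then posSemidefSqrt h else 0

/-- Operator absolute value `|A| = √(Aᴴ A)`. -/
def mAbs {m : Type*} [Fintype m] [DecidableEq m] (A : Matrix m m ℂ) : Matrix m m ℂ :=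
  posSemidefSqrt (Matrix.posSemidef_conjTranspose_mul_self A)

/-- Von Neumann entropy (base-2), via eigenvalues of a Hermitian matrix. -/
def vnEntropy {m : Type*} [Fintype m] [DecidableEq m] (ρ : Matrix m m ℂ) : ℝ :=
  if h : ρ.IsHermitian then -∑ i, (h.eigenvalues i) * Real.logb 2 (h.eigenvalues i) else 0

/-- Partial trace over the first tensor factor. -/
def ptraceA {m p : Type*} [Fintype m] [Fintype p] (X : Matrix (m × p) (m × p) ℂ) :
    Matrix p p ℂ := Matrix.of fun a b => ∑ k, X (k, a) (k, b)

/-- Partial trace over the second tensor factor. -/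
def ptraceB {m p : Type*} [Fintype m] [Fintype p] (X : Matrix (m × p) (m × p) ℂ) :
    Matrix m m ℂ := Matrix.of fun a b => ∑ k, X (a, k) (b, k)

/-- Fidelity `F(ρ,σ) = (Tr |√ρ √σ|)²`. -/
def fidelity {m : Type*} [Fintype m] [DecidableEq m] (ρ σ : Matrix m m ℂ) : ℝ :=
  ((mAbs (mSqrt ρ * mSqrt σ)).trace.re) ^ 2
set_option linter.unreachableTactic false
set_option linter.unusedTactic false


lemma aux_block_row (n : ℕ) (Row : Fin 3 → Matrix (Fin n) (Fin n) ℂ) :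
    (Matrix.of fun (k : Fin n) (p : Fin 3 × Fin n) => Row p.1 k p.2)ᴴ *
      (Matrix.of fun (k : Fin n) (p : Fin 3 × Fin n) => Row p.1 k p.2) =
    Matrix.of fun x y : Fin 3 × Fin n => ((Row x.1)ᴴ * Row y.1) x.2 y.2 := by
  ext ⟨a, i⟩ ⟨b, j⟩
  simp [mul_apply, conjTranspose_apply]

lemma aux_block_quad (n : ℕ) (Blk : Fin 3 → Fin 3 → Matrix (Fin n) (Fin n) ℂ)
    (C : Fin 3 → Matrix (Fin n) (Fin n) ℂ) :
    (Matrix.of fun (p : Fin 3 × Fin n) (j : Fin n) => C p.1 p.2 j)ᴴ *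
      (Matrix.of fun x y : Fin 3 × Fin n => Blk x.1 y.1 x.2 y.2) *
      (Matrix.of fun (p : Fin 3 × Fin n) (j : Fin n) => C p.1 p.2 j) =
    ∑ a, ∑ b, (C a)ᴴ * Blk a b * C b := by
  ext i j
  simp only [mul_apply, conjTranspose_apply, Matrix.of_apply, Fintype.sum_prod_type,
    Finset.sum_apply, Matrix.sum_apply, Finset.mul_sum, Finset.sum_mul, mul_assoc]
  calc ∑ b : Fin 3, ∑ l : Fin n, ∑ a : Fin 3, ∑ k : Fin n,
        star (C a k i) * (Blk a b k l * C b l j)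
      = ∑ b : Fin 3, ∑ a : Fin 3, ∑ l : Fin n, ∑ k : Fin n,
        star (C a k i) * (Blk a b k l * C b l j) :=
        Finset.sum_congr rfl fun b _ => Finset.sum_comm
    _ = ∑ a : Fin 3, ∑ b : Fin 3, ∑ l : Fin n, ∑ k : Fin n,
        star (C a k i) * (Blk a b k l * C b l j) := Finset.sum_comm
    _ = ∑ a : Fin 3, ∑ b : Fin 3, ∑ k : Fin n, ∑ l : Fin n,
        star (C a k i) * (Blk a b k l * C b l j) :=
        Finset.sum_congr rfl fun a _ => Finset.sum_congr rfl fun b _ =>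
          Finset.sum_comm


/-- A 3×3 block matrix [[1,U,V],[U†,1,W],[V†,W†,1]] with unitary U,V,W is PSD iff V = U W. -/
theorem stmt0 (n : ℕ) (U V W : Matrix (Fin n) (Fin n) ℂ)
    (hU : U ∈ Matrix.unitaryGroup (Fin n) ℂ)
    (hV : V ∈ Matrix.unitaryGroup (Fin n) ℂ)
    (hW : W ∈ Matrix.unitaryGroup (Fin n) ℂ) :
    (Matrix.of fun x y : Fin 3 × Fin n =>
        (![![(1 : Matrix (Fin n) (Fin n) ℂ), U, V], ![Uᴴ, 1, W], ![Vᴴ, Wᴴ, 1]] x.1 y.1)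
          x.2 y.2).PosSemidef ↔ V = U * W := by
  have hU1 : Uᴴ * U = 1 := by
    simpa [Matrix.star_eq_conjTranspose] using (Unitary.mem_iff.mp hU).1
  have hU2 : U * Uᴴ = 1 := by
    simpa [Matrix.star_eq_conjTranspose] using (Unitary.mem_iff.mp hU).2
  have hV1 : Vᴴ * V = 1 := by
    simpa [Matrix.star_eq_conjTranspose] using (Unitary.mem_iff.mp hV).1
  have hW1 : Wᴴ * W = 1 := by
    simpa [Matrix.star_eq_conjTranspose] using (Unitary.mem_iff.mp hW).1
  have hW2 : W * Wᴴ = 1 := by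
    simpa [Matrix.star_eq_conjTranspose] using (Unitary.mem_iff.mp hW).2
  constructor
  · -- hard direction
    intro hM
    set Blk : Fin 3 → Fin 3 → Matrix (Fin n) (Fin n) ℂ :=
      ![![(1 : Matrix (Fin n) (Fin n) ℂ), U, V], ![Uᴴ, 1, W], ![Vᴴ, Wᴴ, 1]] with hBlk
    set C : Fin 3 → Matrix (Fin n) (Fin n) ℂ := ![U * W, (-2 : ℂ) • W, 1] with hC
    set A : Matrix (Fin n) (Fin n) ℂ := Wᴴ * (Uᴴ * V) with hA
    have hP : (∑ a, ∑ b, (C a)ᴴ * Blk a b * C b).PosSemidef := by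
      rw [← aux_block_quad n Blk C]
      exact hM.conjTranspose_mul_mul_same _
    have hPval : (∑ a, ∑ b, (C a)ᴴ * Blk a b * C b) = A + Aᴴ - (2 : ℂ) • 1 := by
      simp only [hC, hBlk, Fin.sum_univ_three, Matrix.cons_val_zero, Matrix.cons_val_one,
        Matrix.head_cons, Matrix.cons_val_two, Matrix.tail_cons, hA]
      simp only [conjTranspose_smul, conjTranspose_mul, conjTranspose_one, star_neg,
        star_ofNat, Matrix.smul_mul, Matrix.mul_smul, Matrix.mul_one, Matrix.one_mul,
        conjTranspose_conjTranspose, mul_assoc]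
      rw [show Uᴴ * (U * W) = W by rw [← mul_assoc, hU1, one_mul]]
      rw [hW1]
      module
    have hP' : (A + Aᴴ - (2 : ℂ) • 1).PosSemidef := hPval ▸ hP
    have hAA : Aᴴ * A = 1 := by
      simp only [hA, conjTranspose_mul, conjTranspose_conjTranspose, mul_assoc]
      rw [show W * (Wᴴ * (Uᴴ * V)) = Uᴴ * V by rw [← mul_assoc, hW2, one_mul]]
      rw [show U * (Uᴴ * V) = V by rw [← mul_assoc, hU2, one_mul]]
      exact hV1
    have hBB : (1 - A)ᴴ * (1 - A) = -(A + Aᴴ - (2 : ℂ) • 1) := by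
      simp only [conjTranspose_sub, conjTranspose_one, Matrix.sub_mul, Matrix.mul_sub,
        Matrix.one_mul, Matrix.mul_one, hAA]
      module
    have hzero : ∀ x : Fin n → ℂ, (1 - A) *ᵥ x = 0 := by
      intro x
      have h1 : 0 ≤ star x ⬝ᵥ ((1 - A)ᴴ * (1 - A)) *ᵥ x :=
        (Matrix.posSemidef_conjTranspose_mul_self (1 - A)).dotProduct_mulVec_nonneg x
      have h2 : 0 ≤ star x ⬝ᵥ (A + Aᴴ - (2 : ℂ) • 1) *ᵥ x := hP'.dotProduct_mulVec_nonneg x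
      have h3 : star x ⬝ᵥ ((1 - A)ᴴ * (1 - A)) *ᵥ x
          = -(star x ⬝ᵥ (A + Aᴴ - (2 : ℂ) • 1) *ᵥ x) := by
        rw [hBB, Matrix.neg_mulVec, dotProduct_neg]
      have h4 : star x ⬝ᵥ ((1 - A)ᴴ * (1 - A)) *ᵥ x = 0 :=
        le_antisymm (by rw [h3]; exact neg_nonpos.mpr h2) h1
      have h5 : star ((1 - A) *ᵥ x) ⬝ᵥ ((1 - A) *ᵥ x) = 0 := by
        rw [star_mulVec, ← Matrix.dotProduct_mulVec, Matrix.mulVec_mulVec]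
        exact h4
      exact dotProduct_star_self_eq_zero.mp h5
    have hA0 : (1 : Matrix (Fin n) (Fin n) ℂ) - A = 0 := by
      ext i j
      have := congrFun (hzero (Pi.single j 1)) i
      simpa [Matrix.mulVec_single] using this
    have hA1 : A = 1 := by
      have := sub_eq_zero.mp hA0
      exact this.symm
    have : U * W * A = V := by
      rw [hA, mul_assoc U W, ← mul_assoc W Wᴴ, hW2, Matrix.one_mul, ← mul_assoc, hU2,
        Matrix.one_mul]
    rw [← this, hA1, Matrix.mul_one]
  · -- easy direction
    rintro rfl
    have key : (Matrix.of fun x y : Fin 3 × Fin n =>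
        (![![(1 : Matrix (Fin n) (Fin n) ℂ), U, U * W], ![Uᴴ, 1, W], ![(U * W)ᴴ, Wᴴ, 1]] x.1 y.1)
          x.2 y.2) =
        (Matrix.of fun (k : Fin n) (p : Fin 3 × Fin n) => (![1, U, U * W] : Fin 3 → Matrix (Fin n) (Fin n) ℂ) p.1 k p.2)ᴴ *
        (Matrix.of fun (k : Fin n) (p : Fin 3 × Fin n) => (![1, U, U * W] : Fin 3 → Matrix (Fin n) (Fin n) ℂ) p.1 k p.2) := by
      rw [aux_block_row]
      have hblk : ∀ a b : Fin 3,
          (![![(1 : Matrix (Fin n) (Fin n) ℂ), U, U * W], ![Uᴴ, 1, W], ![(U * W)ᴴ, Wᴴ, 1]] a b) =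
          ((![1, U, U * W] : Fin 3 → Matrix (Fin n) (Fin n) ℂ) a)ᴴ *
          (![1, U, U * W] : Fin 3 → Matrix (Fin n) (Fin n) ℂ) b := by
        intro a b
        fin_cases a <;> fin_cases b <;>
          simp [conjTranspose_mul, hU1, hW1, mul_assoc] <;>
          first
          | rw [← mul_assoc, hU1, one_mul]
          | rw [hU1, mul_one]
          | rw [show Uᴴ * (U * W) = W by rw [← mul_assoc, hU1, one_mul], hW1]
          | rw [show Uᴴ * (U * W) = W by rw [← mul_assoc, hU1, one_mul]]
      ext ⟨a, i⟩ ⟨b, j⟩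
      simp only [Matrix.of_apply]
      rw [hblk]
    rw [key]
    exact Matrix.posSemidef_conjTranspose_mul_self _
end
end

section
/- With the setup of the previous construction (blocks √(p_i p_j)√ρ_i X_{ij} √ρ_j with V = UW), the partial trace of ρ_AB over the n-dimensional factor equals Σ_i p_i ρ_i, and the partial trace over the 3-dimensional factor is the 3×3 matrix whose (i,j) entry is √(p_i p_j F(ρ_i, ρ_j)), i.e., the correlation matrix C_√F of the ensemble, where F(ρ_i, ρ_j) = (Tr|√ρ_i √ρ_j|)² is the fidelity. -/
open Matrix Kronecker Finset ComplexOrder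

noncomputable section
open scoped Classical

section Helpers
variable {m : Type*} [Fintype m] [DecidableEq m]

open scoped MatrixOrder in
lemma posSemidefSqrt_eq {A : Matrix m m ℂ} (hA : A.PosSemidef) :
    posSemidefSqrt hA = CFC.sqrt A := by
  rw [CFC.sqrt_eq_real_sqrt A hA.nonneg, cfcₙ_eq_cfc, hA.1.cfc_eq, IsHermitian.cfc, Unitary.conjStarAlgAut_apply]
  rfl

open scoped MatrixOrder in
lemma mAbs_posSemidef (A : Matrix m m ℂ) : (mAbs A).PosSemidef := by
  rw [mAbs, posSemidefSqrt_eq]; exact (CFC.sqrt_nonneg _).posSemidef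

open scoped MatrixOrder in
lemma mAbs_eq_of {A C : Matrix m m ℂ} (hC : C.PosSemidef) (h : C ^ 2 = Aᴴ * A) :
    mAbs A = C := by
  rw [mAbs, posSemidefSqrt_eq]
  exact CFC.sqrt_unique (by rw [← pow_two]; exact h) hC.nonneg

lemma psd_trace_eq {A : Matrix m m ℂ} (hA : A.PosSemidef) :
    A.trace = (A.trace.re : ℂ) ∧ 0 ≤ A.trace.re := by
  have h0 : (0:ℂ) ≤ A.trace := by
    rw [Matrix.trace]
    apply Finset.sum_nonneg
    intro i _
    exact hA.diag_nonneg
  rw [Complex.nonneg_iff] at h0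
  exact ⟨by rw [Complex.ext_iff]; simp [h0.2], h0.1⟩

open scoped MatrixOrder in
lemma mSqrt_mul_self {A : Matrix m m ℂ} (hA : A.PosSemidef) : mSqrt A * mSqrt A = A := by
  rw [mSqrt, dif_pos hA, posSemidefSqrt_eq]; exact CFC.sqrt_mul_sqrt_self A (hA.nonneg)

open scoped MatrixOrder in
lemma mSqrt_herm {A : Matrix m m ℂ} (hA : A.PosSemidef) : (mSqrt A)ᴴ = mSqrt A := by
  rw [mSqrt, dif_pos hA, posSemidefSqrt_eq]; exact (CFC.sqrt_nonneg A).posSemidef.1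

lemma mAbs_diag {A : Matrix m m ℂ} (hA : A.PosSemidef) : mAbs (mSqrt A * mSqrt A) = A := by
  rw [mSqrt_mul_self hA]
  exact mAbs_eq_of hA (by rw [pow_two, hA.1.eq])

lemma polar_conj {A X : Matrix m m ℂ} (hX : Xᴴ * X = 1) (h : mAbs A = X * A) :
    mAbs Aᴴ = A * X := by
  have hXA : (X * A).PosSemidef := h ▸ mAbs_posSemidef A
  have herm : Aᴴ * Xᴴ = X * A := by
    rw [← Matrix.conjTranspose_mul]; exact hXA.1
  have hPSD : (A * X).PosSemidef := by
    rw [show A * X = Xᴴ * (X * A) * X by rw [← mul_assoc Xᴴ X A, hX, one_mul]]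
    exact hXA.conjTranspose_mul_mul_same X
  refine mAbs_eq_of hPSD ?_
  rw [Matrix.conjTranspose_conjTranspose, pow_two]
  calc A * X * (A * X) = A * (X * A) * X := by
        rw [mul_assoc A X (A * X), ← mul_assoc X A X, ← mul_assoc]
    _ = A * (Aᴴ * Xᴴ) * X := by rw [herm]
    _ = A * Aᴴ * (Xᴴ * X) := by simp only [mul_assoc]
    _ = A * Aᴴ := by rw [hX, mul_one]

lemma offdiag_trace {a b X : Matrix m m ℂ} (ha : aᴴ = a) (hb : bᴴ = b)
    (hX : Xᴴ * X = 1) (hpol : mAbs (b * a) = X * (b * a)) :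
    ∃ t : ℝ, 0 ≤ t ∧
      (a * X * b).trace = (t : ℂ) ∧ (b * Xᴴ * a).trace = (t : ℂ) ∧
      (mAbs (a * b)).trace.re = t ∧ (mAbs (b * a)).trace.re = t := by
  set A := b * a with hA
  obtain ⟨heq, hnn⟩ := psd_trace_eq (mAbs_posSemidef A)
  refine ⟨(mAbs A).trace.re, hnn, ?_, ?_, ?_, rfl⟩
  · have h1 : (a * X * b).trace = (X * A).trace := by
      calc (a * X * b).trace = (b * (a * X)).trace := by rw [Matrix.trace_mul_comm]
        _ = (X * (b * a)).trace := by rw [← mul_assoc, Matrix.trace_mul_comm]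
    rw [h1, ← hpol, heq]
    simp
  · have h3 : (b * Xᴴ * a).trace = star (X * A).trace := by
      rw [← Matrix.trace_conjTranspose]
      have hct : (X * A)ᴴ = a * b * Xᴴ := by
        rw [hA, Matrix.conjTranspose_mul, Matrix.conjTranspose_mul, ha, hb]
      rw [hct, Matrix.trace_mul_cycle b Xᴴ a]
    rw [h3, ← hpol, heq]
    simp
  · have hab : a * b = Aᴴ := by rw [hA, Matrix.conjTranspose_mul, ha, hb]
    have h2 : mAbs Aᴴ = A * X := polar_conj hX hpol
    rw [hab, h2, Matrix.trace_mul_comm, ← hpol, heq]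

end Helpers

/-- The marginals of the block construction: the average state and the correlation matrix. -/
theorem stmt11 (n : ℕ)
(ρ : Fin 3 → Matrix (Fin n) (Fin n) ℂ)
    (hρ : ∀ i, (ρ i).PosSemidef ∧ (ρ i).trace = 1)
    (p : Fin 3 → ℝ) (hp : ∀ i, 0 < p i) (hpsum : ∑ i, p i = 1)
    (U V W : Matrix (Fin n) (Fin n) ℂ)
    (hU : U ∈ Matrix.unitaryGroup (Fin n) ℂ)
    (hV : V ∈ Matrix.unitaryGroup (Fin n) ℂ)
    (hW : W ∈ Matrix.unitaryGroup (Fin n) ℂ)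
    (hpolU : mAbs (mSqrt (ρ 1) * mSqrt (ρ 0)) = U * (mSqrt (ρ 1) * mSqrt (ρ 0)))
    (hpolV : mAbs (mSqrt (ρ 2) * mSqrt (ρ 0)) = V * (mSqrt (ρ 2) * mSqrt (ρ 0)))
    (hpolW : mAbs (mSqrt (ρ 2) * mSqrt (ρ 1)) = W * (mSqrt (ρ 2) * mSqrt (ρ 1)))
    (hVUW : V = U * W)
    (ρAB : Matrix (Fin 3 × Fin n) (Fin 3 × Fin n) ℂ)
    (hρAB : ρAB = Matrix.of fun x y : Fin 3 × Fin n =>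
      (Real.sqrt (p x.1 * p y.1) : ℂ) *
        (mSqrt (ρ x.1) *
          (![![(1 : Matrix (Fin n) (Fin n) ℂ), U, V], ![Uᴴ, 1, W], ![Vᴴ, Wᴴ, 1]] x.1 y.1) *
          mSqrt (ρ y.1)) x.2 y.2) :
    ptraceA ρAB = ∑ i, p i • ρ i ∧
    ptraceB ρAB = Matrix.of (fun i j : Fin 3 =>
      (Real.sqrt (p i * p j * fidelity (ρ i) (ρ j)) : ℂ)) := by
  have hPSD : ∀ i, (ρ i).PosSemidef := fun i => (hρ i).1
  have htr : ∀ i, (ρ i).trace = 1 := fun i => (hρ i).2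
  have hs : ∀ i, mSqrt (ρ i) * mSqrt (ρ i) = ρ i := fun i => mSqrt_mul_self (hPSD i)
  have hh : ∀ i, (mSqrt (ρ i))ᴴ = mSqrt (ρ i) := fun i => mSqrt_herm (hPSD i)
  have hfid : ∀ i, fidelity (ρ i) (ρ i) = 1 := by
    intro i
    simp only [fidelity, mAbs_diag (hPSD i), htr i]
    norm_num
  have hUu : Uᴴ * U = 1 := by
    rw [← Matrix.star_eq_conjTranspose]; exact Matrix.mem_unitaryGroup_iff'.mp hU
  have hVu : Vᴴ * V = 1 := by
    rw [← Matrix.star_eq_conjTranspose]; exact Matrix.mem_unitaryGroup_iff'.mp hV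
  have hWu : Wᴴ * W = 1 := by
    rw [← Matrix.star_eq_conjTranspose]; exact Matrix.mem_unitaryGroup_iff'.mp hW
  obtain ⟨tU, htU0, hU1, hU2, hU3, hU4⟩ := offdiag_trace (hh 0) (hh 1) hUu hpolU
  obtain ⟨tV, htV0, hV1, hV2, hV3, hV4⟩ := offdiag_trace (hh 0) (hh 2) hVu hpolV
  obtain ⟨tW, htW0, hW1, hW2, hW3, hW4⟩ := offdiag_trace (hh 1) (hh 2) hWu hpolW
  subst hρAB
  constructor
  · ext a b
    simp only [ptraceA, Matrix.of_apply, Fin.sum_univ_three, Matrix.sum_apply,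
      Matrix.smul_apply, Matrix.cons_val_zero, Matrix.cons_val_one, Matrix.head_cons,
      Matrix.cons_val_two, Matrix.tail_cons, Matrix.head_fin_const]
    rw [mul_one, mul_one, mul_one, hs 0, hs 1, hs 2,
      Real.sqrt_mul_self (hp 0).le, Real.sqrt_mul_self (hp 1).le,
      Real.sqrt_mul_self (hp 2).le]
    simp [Complex.real_smul]
  · have key : ∀ i j : Fin 3,
        ptraceB (Matrix.of fun x y : Fin 3 × Fin n =>
          (Real.sqrt (p x.1 * p y.1) : ℂ) *
            (mSqrt (ρ x.1) *
              (![![(1 : Matrix (Fin n) (Fin n) ℂ), U, V], ![Uᴴ, 1, W], ![Vᴴ, Wᴴ, 1]] x.1 y.1) *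
              mSqrt (ρ y.1)) x.2 y.2) i j =
        (Real.sqrt (p i * p j) : ℂ) *
          (mSqrt (ρ i) *
            (![![(1 : Matrix (Fin n) (Fin n) ℂ), U, V], ![Uᴴ, 1, W], ![Vᴴ, Wᴴ, 1]] i j) *
            mSqrt (ρ j)).trace := by
      intro i j
      simp [ptraceB, Matrix.trace, Matrix.diag, Finset.mul_sum]
    ext i j
    rw [key, Matrix.of_apply]
    have hsq : ∀ (x y t : ℝ), 0 < x → 0 < y → 0 ≤ t →
        (Real.sqrt (x * y * t ^ 2) : ℂ) = (Real.sqrt (x * y) : ℂ) * t := by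
      intro x y t hx hy ht
      rw [Real.sqrt_mul (by positivity), Real.sqrt_sq ht]
      push_cast
      ring
    fin_cases i <;> fin_cases j <;>
      simp only [Fin.zero_eta, Fin.mk_one, Fin.reduceFinMk, Fin.isValue,
        Matrix.cons_val_zero, Matrix.cons_val_one, Matrix.head_cons,
        Matrix.cons_val_two, Matrix.tail_cons, Matrix.head_fin_const]
    · rw [mul_one, hs 0, htr 0, hfid 0, mul_one, mul_one]
    · rw [hU1, fidelity, hU3, hsq _ _ _ (hp 0) (hp 1) htU0]
    · rw [hV1, fidelity, hV3, hsq _ _ _ (hp 0) (hp 2) htV0]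
    · rw [hU2, fidelity, hU4, hsq _ _ _ (hp 1) (hp 0) htU0]
    · rw [mul_one, hs 1, htr 1, hfid 1, mul_one, mul_one]
    · rw [hW1, fidelity, hW3, hsq _ _ _ (hp 1) (hp 2) htW0]
    · rw [hV2, fidelity, hV4, hsq _ _ _ (hp 2) (hp 0) htV0]
    · rw [hW2, fidelity, hW4, hsq _ _ _ (hp 2) (hp 1) htW0]
    · rw [mul_one, hs 2, htr 2, hfid 2, mul_one, mul_one]
end
end
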